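/- arXiv:1911.08889 — 5 statements merged into one kernel-verified Lean document; each statement's English description precedes it below -/
import Mathlib

section
/- If G is a finite Z-insensitive graph, then the game Z-domination number of G equals the game domination number of G, and the Staller-start game Z-domination number of G equals the Staller-start game domination number of G: γ_Zg(G) = γ_g(G) and γ'_Zg(G) = γ'_g(G). -/
open Finset

open scoped Classical

noncomputable section

namespace ZGamePaper

variable {V : Type*} {W : Type*}

/-- The closed neighborhood `N[v]` of a vertex as a `Finset`. -/
def closedNF [Fintype V] (G : SimpleGraph V) (v : V) : Finset V :=
  Finset.univ.filter fun x => x = v ∨ G.Adj v x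

/-- The open neighborhood `N(v)` of a vertex as a `Finset`. -/
def openNF [Fintype V] (G : SimpleGraph V) (v : V) : Finset V :=
  Finset.univ.filter fun x => G.Adj v x

lemma openNF_subset_closedNF [Fintype V] (G : SimpleGraph V) (v : V) :
    openNF G v ⊆ closedNF G v := by
  intro x hx
  simp only [openNF, closedNF, mem_filter] at hx ⊢
  exact ⟨hx.1, Or.inr hx.2⟩

lemma measure_dec [Fintype V] {A C : Finset V} {w : V} (hw : w ∈ C) (hwA : w ∉ A) :
    (Finset.univ \ (A ∪ C)).card < (Finset.univ \ A).card := by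
  apply Finset.card_lt_card
  rw [Finset.ssubset_iff_of_subset
    (Finset.sdiff_subset_sdiff (le_refl _) Finset.subset_union_left)]
  refine ⟨w, ?_, ?_⟩
  · simp [hwA]
  · simp [hw]

/-! ### The Z-domination game -/

/-- The set of legal moves in the Z-domination game, given the set `A` of
already dominated vertices: a vertex `v` is legal if `N(v) ⊄ A`. -/
def zLegal [Fintype V] (G : SimpleGraph V) (A : Finset V) : Finset V :=
  Finset.univ.filter fun v => ¬ openNF G v ⊆ A

lemma zLegal_dec [Fintype V] (G : SimpleGraph V) (A : Finset V) {v : V}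
    (hv : v ∈ zLegal G A) :
    (Finset.univ \ (A ∪ closedNF G v)).card < (Finset.univ \ A).card := by
  simp only [zLegal, mem_filter] at hv
  obtain ⟨w, hw1, hw2⟩ := Finset.not_subset.mp hv.2
  exact measure_dec (openNF_subset_closedNF G v hw1) hw2

/-- The optimal number of remaining moves in the Z-domination game played on `G`,
where `A` is the set of already dominated vertices and `turn = true` iff it is
Dominator's (the minimizer's) turn. -/
def zVal [Fintype V] (G : SimpleGraph V) (turn : Bool) (A : Finset V) : ℕ :=
  if h : (zLegal G A).Nonempty then
    if turn then
      1 + ((zLegal G A).attach.inf' h.attach fun v => zVal G false (A ∪ closedNF G v.1))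
    else
      1 + ((zLegal G A).attach.sup' h.attach fun v => zVal G true (A ∪ closedNF G v.1))
  else 0
termination_by (Finset.univ \ A).card
decreasing_by
  · exact zLegal_dec G A v.2
  · exact zLegal_dec G A v.2

/-- The game Z-domination number `γ_Zg(G)` (Dominator starts). -/
def gammaZg [Fintype V] (G : SimpleGraph V) : ℕ := zVal G true ∅

/-- The Staller-start game Z-domination number `γ'_Zg(G)`. -/
def gammaZg' [Fintype V] (G : SimpleGraph V) : ℕ := zVal G false ∅

/-! ### The (ordinary) domination game -/

/-- The set of legal moves in the domination game: `v` is legal if `N[v] ⊄ A`.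
This set is nonempty if and only if `A ≠ V(G)`. -/
def dLegal [Fintype V] (G : SimpleGraph V) (A : Finset V) : Finset V :=
  Finset.univ.filter fun v => ¬ closedNF G v ⊆ A

lemma dLegal_dec [Fintype V] (G : SimpleGraph V) (A : Finset V) {v : V}
    (hv : v ∈ dLegal G A) :
    (Finset.univ \ (A ∪ closedNF G v)).card < (Finset.univ \ A).card := by
  simp only [dLegal, mem_filter] at hv
  obtain ⟨w, hw1, hw2⟩ := Finset.not_subset.mp hv.2
  exact measure_dec hw1 hw2

/-- The optimal number of remaining moves in the domination game on `G`, with `A`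
the set of already dominated vertices; `turn = true` iff it is Dominator's turn.
(There is no legal move iff `A = V(G)`.) -/
def dVal [Fintype V] (G : SimpleGraph V) (turn : Bool) (A : Finset V) : ℕ :=
  if h : (dLegal G A).Nonempty then
    if turn then
      1 + ((dLegal G A).attach.inf' h.attach fun v => dVal G false (A ∪ closedNF G v.1))
    else
      1 + ((dLegal G A).attach.sup' h.attach fun v => dVal G true (A ∪ closedNF G v.1))
  else 0
termination_by (Finset.univ \ A).card
decreasing_by
  · exact dLegal_dec G A v.2
  · exact dLegal_dec G A v.2

/-- The game domination number `γ_g(G)` (Dominator starts). -/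
def gammaGg [Fintype V] (G : SimpleGraph V) : ℕ := dVal G true ∅

/-- The Staller-start game domination number `γ'_g(G)`. -/
def gammaGg' [Fintype V] (G : SimpleGraph V) : ℕ := dVal G false ∅

/-! ### The total domination game -/

/-- The set of legal moves in the total domination game: `v` is legal if `N(v) ⊄ B`.
For a graph without isolated vertices this set is nonempty iff `B ≠ V(G)`. -/
def tLegal [Fintype V] (G : SimpleGraph V) (B : Finset V) : Finset V :=
  Finset.univ.filter fun v => ¬ openNF G v ⊆ B

lemma tLegal_dec [Fintype V] (G : SimpleGraph V) (B : Finset V) {v : V}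
    (hv : v ∈ tLegal G B) :
    (Finset.univ \ (B ∪ openNF G v)).card < (Finset.univ \ B).card := by
  simp only [tLegal, mem_filter] at hv
  obtain ⟨w, hw1, hw2⟩ := Finset.not_subset.mp hv.2
  exact measure_dec hw1 hw2

/-- The optimal number of remaining moves in the total domination game on `G`,
with `B` the set of already totally dominated vertices; `turn = true` iff it is
Dominator's turn. -/
def tVal [Fintype V] (G : SimpleGraph V) (turn : Bool) (B : Finset V) : ℕ :=
  if h : (tLegal G B).Nonempty then
    if turn then
      1 + ((tLegal G B).attach.inf' h.attach fun v => tVal G false (B ∪ openNF G v.1))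
    else
      1 + ((tLegal G B).attach.sup' h.attach fun v => tVal G true (B ∪ openNF G v.1))
  else 0
termination_by (Finset.univ \ B).card
decreasing_by
  · exact tLegal_dec G B v.2
  · exact tLegal_dec G B v.2

/-- The game total domination number `γ_tg(G)` (Dominator starts). -/
def gammaTg [Fintype V] (G : SimpleGraph V) : ℕ := tVal G true ∅

/-! ### The L-domination game -/

/-- The set of legal moves in the L-domination game, given the set `P` of vertices
played so far: `v` is legal if `v ∉ P` and `N[v] ⊄ N(P)`. -/
def lLegal [Fintype V] (G : SimpleGraph V) (P : Finset V) : Finset V :=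
  Finset.univ.filter fun v => v ∉ P ∧ ¬ closedNF G v ⊆ P.biUnion (openNF G)

lemma lLegal_dec [Fintype V] (G : SimpleGraph V) (P : Finset V) {v : V}
    (hv : v ∈ lLegal G P) :
    (Finset.univ \ insert v P).card < (Finset.univ \ P).card := by
  simp only [lLegal, mem_filter] at hv
  apply Finset.card_lt_card
  rw [Finset.ssubset_iff_of_subset
    (Finset.sdiff_subset_sdiff (le_refl _) (Finset.subset_insert _ _))]
  exact ⟨v, by simp [hv.2.1], by simp⟩

/-- The optimal number of remaining moves in the L-domination game on `G`, with `P`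
the set of vertices played so far; `turn = true` iff it is Dominator's turn. -/
def lVal [Fintype V] (G : SimpleGraph V) (turn : Bool) (P : Finset V) : ℕ :=
  if h : (lLegal G P).Nonempty then
    if turn then
      1 + ((lLegal G P).attach.inf' h.attach fun v => lVal G false (insert v.1 P))
    else
      1 + ((lLegal G P).attach.sup' h.attach fun v => lVal G true (insert v.1 P))
  else 0
termination_by (Finset.univ \ P).card
decreasing_by
  · exact lLegal_dec G P v.2
  · exact lLegal_dec G P v.2

/-- The game L-domination number `γ_Lg(G)` (Dominator starts). -/
def gammaLg [Fintype V] (G : SimpleGraph V) : ℕ := lVal G true ∅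

/-! ### Domination number and related notions -/

/-- The domination number `γ(G)`: the minimum size of a set `S` with `N[S] = V(G)`. -/
def gammaNum [Fintype V] (G : SimpleGraph V) : ℕ :=
  sInf {k | ∃ S : Finset V, S.card = k ∧ ∀ v : V, ∃ u ∈ S, v ∈ closedNF G u}

/-- The partially dominated graph `G|A` has a Z-configuration if there is an
undominated vertex `v` all of whose neighbors are dominated, while every neighbor
of `v` has at least two undominated neighbors. -/
def HasZConfig [Fintype V] (G : SimpleGraph V) (A : Finset V) : Prop :=
  ∃ v : V, v ∉ A ∧ openNF G v ⊆ A ∧ ∀ u ∈ openNF G v, 2 ≤ (openNF G u \ A).card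

/-- A graph without isolated vertices is Z-insensitive if for every `D ⊆ V(G)` the
partially dominated graph `G|N[D]` has no Z-configuration. -/
def ZInsensitive [Fintype V] (G : SimpleGraph V) : Prop :=
  (∀ v : V, ∃ u : V, G.Adj v u) ∧
    ∀ D : Finset V, ¬ HasZConfig G (D.biUnion (closedNF G))

/-- A vertex `w` is the center of a claw if it has three pairwise non-adjacent
neighbors. -/
def IsClawCenter (G : SimpleGraph V) (w : V) : Prop :=
  ∃ a b c : V, G.Adj w a ∧ G.Adj w b ∧ G.Adj w c ∧ a ≠ b ∧ a ≠ c ∧ b ≠ c ∧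
    ¬ G.Adj a b ∧ ¬ G.Adj a c ∧ ¬ G.Adj b c

/-- A graph is weakly claw-free if every vertex has a neighbor that is not the
center of a claw. -/
def WeaklyClawFree (G : SimpleGraph V) : Prop :=
  ∀ v : V, ∃ u : V, G.Adj v u ∧ ¬ IsClawCenter G u

/-- The lexicographic product `G ∘ H`. -/
def lexProd (G : SimpleGraph V) (H : SimpleGraph W) : SimpleGraph (V × W) where
  Adj p q := G.Adj p.1 q.1 ∨ (p.1 = q.1 ∧ H.Adj p.2 q.2)
  symm := by
    constructor
    rintro p q (h | ⟨h1, h2⟩)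
    · exact Or.inl h.symm
    · exact Or.inr ⟨h1.symm, h2.symm⟩
  loopless := by
    constructor
    rintro p (h | ⟨_, h⟩)
    · exact G.loopless.irrefl _ h
    · exact H.loopless.irrefl _ h



lemma zLegal_subset_dLegal [Fintype V] (G : SimpleGraph V) (A : Finset V) :
    zLegal G A ⊆ dLegal G A := by
  intro v hv
  simp only [zLegal, dLegal, mem_filter] at hv ⊢
  exact ⟨hv.1, fun hc => hv.2 ((openNF_subset_closedNF G v).trans hc)⟩

lemma inf'_attach_eq {α β : Type*} [DecidableEq β] (s : Finset α) (h : s.Nonempty)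
    (g : α → β) (f : β → ℕ) :
    s.attach.inf' h.attach (fun v => f (g v.1)) = (s.image g).inf' (h.image g) f := by
  apply le_antisymm
  · apply Finset.le_inf'
    intro b hb
    obtain ⟨a, ha, rfl⟩ := Finset.mem_image.mp hb
    exact Finset.inf'_le (fun v => f (g v.1)) (Finset.mem_attach s ⟨a, ha⟩)
  · apply Finset.le_inf'
    intro v _
    exact Finset.inf'_le _ (Finset.mem_image_of_mem g v.2)

lemma sup'_attach_eq {α β : Type*} [DecidableEq β] (s : Finset α) (h : s.Nonempty)
    (g : α → β) (f : β → ℕ) :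
    s.attach.sup' h.attach (fun v => f (g v.1)) = (s.image g).sup' (h.image g) f := by
  apply le_antisymm
  · apply Finset.sup'_le
    intro v _
    exact Finset.le_sup' _ (Finset.mem_image_of_mem g v.2)
  · apply Finset.sup'_le
    intro b hb
    obtain ⟨a, ha, rfl⟩ := Finset.mem_image.mp hb
    exact Finset.le_sup' (fun v => f (g v.1)) (Finset.mem_attach s ⟨a, ha⟩)

lemma image_legal_eq [Fintype V] (G : SimpleGraph V) (h : ZInsensitive G) (D : Finset V) :
    (zLegal G (D.biUnion (closedNF G))).image
        (fun v => D.biUnion (closedNF G) ∪ closedNF G v)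
      = (dLegal G (D.biUnion (closedNF G))).image
        (fun v => D.biUnion (closedNF G) ∪ closedNF G v) := by
  set A := D.biUnion (closedNF G) with hAdef
  apply Finset.Subset.antisymm
  · exact Finset.image_subset_image (zLegal_subset_dLegal G A)
  · intro B hB
    obtain ⟨v, hv, rfl⟩ := Finset.mem_image.mp hB
    by_cases hvz : v ∈ zLegal G A
    · exact Finset.mem_image_of_mem _ hvz
    · -- v is d-legal but not z-legal: N(v) ⊆ A, v ∉ A
      simp only [dLegal, mem_filter, Finset.mem_univ, true_and] at hv
      simp only [zLegal, mem_filter, Finset.mem_univ, true_and, not_not] at hvz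
      have hvA : v ∉ A := by
        intro hvA
        apply hv
        intro x hx
        simp only [closedNF, mem_filter] at hx
        rcases hx.2 with rfl | hadj
        · exact hvA
        · exact hvz (by simp [openNF, hadj])
      have hnoZ := h.2 D
      rw [HasZConfig] at hnoZ
      push_neg at hnoZ
      obtain ⟨u, hu, hucard⟩ := hnoZ v hvA hvz
      rw [← hAdef] at hucard
      have huA : u ∈ A := hvz hu
      have hadj_uv : G.Adj u v := by
        simp only [openNF, mem_filter] at hu
        exact hu.2.symm
      have hvmem : v ∈ openNF G u \ A := by
        simp [openNF, hadj_uv, hvA]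
      have hsing : openNF G u \ A = {v} := by
        apply Finset.eq_singleton_iff_unique_mem.mpr
        refine ⟨hvmem, fun x hx => ?_⟩
        exact Finset.card_le_one.mp (by omega) x hx v hvmem
      have huz : u ∈ zLegal G A := by
        simp only [zLegal, mem_filter, Finset.mem_univ, true_and]
        intro hsub
        exact hvA (hsub (Finset.mem_sdiff.mp hvmem).1)
      refine Finset.mem_image.mpr ⟨u, huz, ?_⟩
      -- A ∪ closedNF u = A ∪ closedNF v = insert v A
      have h1 : A ∪ closedNF G u = insert v A := by
        ext x
        simp only [Finset.mem_union, Finset.mem_insert, closedNF, mem_filter,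
          Finset.mem_univ, true_and]
        constructor
        · rintro (hx | rfl | hadj)
          · exact Or.inr hx
          · exact Or.inr huA
          · by_cases hxA : x ∈ A
            · exact Or.inr hxA
            · have : x ∈ openNF G u \ A := by simp [openNF, hadj, hxA]
              rw [hsing] at this
              exact Or.inl (Finset.mem_singleton.mp this)
        · rintro (rfl | hx)
          · exact Or.inr (Or.inr hadj_uv)
          · exact Or.inl hx
      have h2 : A ∪ closedNF G v = insert v A := by
        ext x
        simp only [Finset.mem_union, Finset.mem_insert, closedNF, mem_filter,
          Finset.mem_univ, true_and]
        constructor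
        · rintro (hx | rfl | hadj)
          · exact Or.inr hx
          · exact Or.inl rfl
          · exact Or.inr (hvz (by simp [openNF, hadj]))
        · rintro (rfl | hx)
          · exact Or.inr (Or.inl rfl)
          · exact Or.inl hx
      rw [h1, h2]

lemma union_closedNF_eq [Fintype V] (G : SimpleGraph V) (D : Finset V) (v : V) :
    D.biUnion (closedNF G) ∪ closedNF G v = (insert v D).biUnion (closedNF G) := by
  rw [Finset.biUnion_insert, Finset.union_comm]

lemma zVal_eq_dVal [Fintype V] (G : SimpleGraph V) (h : ZInsensitive G) :
    ∀ (n : ℕ) (D : Finset V) (t : Bool),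
      (Finset.univ \ D.biUnion (closedNF G)).card ≤ n →
      zVal G t (D.biUnion (closedNF G)) = dVal G t (D.biUnion (closedNF G)) := by
  intro n
  induction n with
  | zero =>
    intro D t hcard
    have hA : D.biUnion (closedNF G) = Finset.univ := by
      have h0 : Finset.univ \ D.biUnion (closedNF G) = ∅ :=
        Finset.card_eq_zero.mp (Nat.le_zero.mp hcard)
      have := Finset.sdiff_eq_empty_iff_subset.mp h0
      exact Finset.Subset.antisymm (Finset.subset_univ _) this
    have hz : ¬ (zLegal G (D.biUnion (closedNF G))).Nonempty := by
      rw [hA]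
      simp [zLegal, Finset.filter_eq_empty_iff, Finset.not_nonempty_iff_eq_empty]
    have hd : ¬ (dLegal G (D.biUnion (closedNF G))).Nonempty := by
      rw [hA]
      simp [dLegal, Finset.filter_eq_empty_iff, Finset.not_nonempty_iff_eq_empty]
    rw [zVal, dVal, dif_neg hz, dif_neg hd]
  | succ n ih =>
    intro D t hcard
    set A := D.biUnion (closedNF G) with hAdef
    have himg := image_legal_eq G h D
    have hne : (zLegal G A).Nonempty ↔ (dLegal G A).Nonempty := by
      rw [← Finset.image_nonempty (f := fun v => A ∪ closedNF G v),
        ← Finset.image_nonempty (s := dLegal G A) (f := fun v => A ∪ closedNF G v), himg]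
    have hIH : ∀ v ∈ dLegal G A, ∀ t' : Bool,
        zVal G t' (A ∪ closedNF G v) = dVal G t' (A ∪ closedNF G v) := by
      intro v hv t'
      rw [union_closedNF_eq]
      apply ih
      rw [← union_closedNF_eq, ← hAdef]
      have := dLegal_dec G A hv
      omega
    rw [zVal, dVal]
    by_cases hz : (zLegal G A).Nonempty
    · have hd : (dLegal G A).Nonempty := hne.mp hz
      rw [dif_pos hz, dif_pos hd]
      cases t with
      | true =>
        simp only [if_true]
        congr 1
        rw [inf'_attach_eq (zLegal G A) hz (fun v => A ∪ closedNF G v) (zVal G false),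
          inf'_attach_eq (dLegal G A) hd (fun v => A ∪ closedNF G v) (dVal G false)]
        apply Finset.inf'_congr _ himg
        intro B hB
        obtain ⟨v, hv, rfl⟩ := Finset.mem_image.mp hB
        exact hIH v (zLegal_subset_dLegal G A hv) false
      | false =>
        simp only [Bool.false_eq_true, if_false]
        congr 1
        rw [sup'_attach_eq (zLegal G A) hz (fun v => A ∪ closedNF G v) (zVal G true),
          sup'_attach_eq (dLegal G A) hd (fun v => A ∪ closedNF G v) (dVal G true)]
        apply Finset.sup'_congr _ himg
        intro B hB
        obtain ⟨v, hv, rfl⟩ := Finset.mem_image.mp hB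
        exact hIH v (zLegal_subset_dLegal G A hv) true
    · have hd : ¬ (dLegal G A).Nonempty := fun hd => hz (hne.mpr hd)
      rw [dif_neg hz, dif_neg hd]

/-- If `G` is a finite Z-insensitive graph, then
`γ_Zg(G) = γ_g(G)` and `γ'_Zg(G) = γ'_g(G)`. -/
theorem zInsensitive_gammaZg_eq_gammaGg {V : Type*} [Fintype V] (G : SimpleGraph V)
    (h : ZInsensitive G) :
    gammaZg G = gammaGg G ∧ gammaZg' G = gammaGg' G := by
  have h0 : (∅ : Finset V) = (∅ : Finset V).biUnion (closedNF G) := by simp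
  constructor
  · rw [gammaZg, gammaGg, h0]
    exact zVal_eq_dVal G h _ ∅ true le_rfl
  · rw [gammaZg', gammaGg', h0]
    exact zVal_eq_dVal G h _ ∅ false le_rfl

end ZGamePaper
end
end

section
/- If G is a finite weakly claw-free graph, then the game Z-domination number of G equals the game domination number of G, and the Staller-start game Z-domination number of G equals the Staller-start game domination number of G: γ_Zg(G) = γ_g(G) and γ'_Zg(G) = γ'_g(G). -/
open Finset

open scoped Classical

noncomputable section

namespace ZGamePaper

variable {V : Type*} {W : Type*}

lemma mem_closedNF' [Fintype V] {G : SimpleGraph V} {v x : V} :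
    x ∈ closedNF G v ↔ x = v ∨ G.Adj v x := by
  simp [closedNF]

lemma mem_openNF' [Fintype V] {G : SimpleGraph V} {v x : V} :
    x ∈ openNF G v ↔ G.Adj v x := by
  simp [openNF]

lemma wcf_core [Fintype V] {G : SimpleGraph V} (h : WeaklyClawFree G) (D : Finset V)
    {v : V} (hv : v ∉ D.biUnion (closedNF G))
    (hnv : openNF G v ⊆ D.biUnion (closedNF G)) :
    ∃ u, G.Adj v u ∧ openNF G u ⊆ D.biUnion (closedNF G) ∪ {v} := by
  obtain ⟨u, hadj, hnc⟩ := h v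
  refine ⟨u, hadj, ?_⟩
  intro w hw
  by_contra hwmem
  simp only [Finset.mem_union, Finset.mem_singleton, not_or] at hwmem
  obtain ⟨hwA, hwv⟩ := hwmem
  have hAdjw : G.Adj u w := mem_openNF'.mp hw
  have huA : u ∈ D.biUnion (closedNF G) := hnv (mem_openNF'.mpr hadj)
  obtain ⟨d, hdD, hud⟩ := Finset.mem_biUnion.mp huA
  have hdA : ∀ x, (x = d ∨ G.Adj d x) → x ∈ D.biUnion (closedNF G) := fun x hx =>
    Finset.mem_biUnion.mpr ⟨d, hdD, mem_closedNF'.mpr hx⟩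
  rw [mem_closedNF'] at hud
  cases hud with
  | inl hud => exact hv (hdA v (Or.inr (hud ▸ hadj.symm)))
  | inr hud =>
    apply hnc
    refine ⟨v, w, d, hadj.symm, hAdjw, hud.symm, ?_, ?_, ?_, ?_, ?_, ?_⟩
    · exact fun e => hwv e.symm
    · exact fun e => hv (e ▸ hdA d (Or.inl rfl))
    · exact fun e => hwA (e ▸ hdA d (Or.inl rfl))
    · exact fun e => hwA (hnv (mem_openNF'.mpr e))
    · exact fun e => hv (hdA v (Or.inr e.symm))
    · exact fun e => hwA (hdA w (Or.inr e.symm))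

lemma replace_move [Fintype V] {G : SimpleGraph V} (h : WeaklyClawFree G) (D : Finset V)
    {v : V} (hv : v ∈ dLegal G (D.biUnion (closedNF G))) :
    ∃ u ∈ zLegal G (D.biUnion (closedNF G)),
      D.biUnion (closedNF G) ∪ closedNF G u = D.biUnion (closedNF G) ∪ closedNF G v := by
  set A := D.biUnion (closedNF G) with hAdef
  by_cases hz : v ∈ zLegal G A
  · exact ⟨v, hz, rfl⟩
  · simp only [zLegal, mem_filter, mem_univ, true_and, not_not] at hz
    simp only [dLegal, mem_filter, mem_univ, true_and] at hv
    have hvA : v ∉ A := by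
      intro hvA
      apply hv
      intro x hx
      rcases mem_closedNF'.mp hx with e | e
      · exact e ▸ hvA
      · exact hz (mem_openNF'.mpr e)
    obtain ⟨u, hadj, hsub⟩ := wcf_core h D hvA hz
    have huA : u ∈ A := hz (mem_openNF'.mpr hadj)
    have huz : u ∈ zLegal G A := by
      simp only [zLegal, mem_filter, mem_univ, true_and]
      exact fun hs => hvA (hs (mem_openNF'.mpr hadj.symm))
    refine ⟨u, huz, ?_⟩
    have h1 : A ∪ closedNF G u = A ∪ {v} := by
      apply Finset.Subset.antisymm
      · intro x hx
        rcases Finset.mem_union.mp hx with hx | hx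
        · exact Finset.mem_union_left _ hx
        · rcases mem_closedNF'.mp hx with e | e
          · exact Finset.mem_union_left _ (e ▸ huA)
          · exact hsub (mem_openNF'.mpr e)
      · intro x hx
        rcases Finset.mem_union.mp hx with hx | hx
        · exact Finset.mem_union_left _ hx
        · rw [Finset.mem_singleton] at hx
          exact Finset.mem_union_right _ (mem_closedNF'.mpr (Or.inr (hx ▸ hadj.symm)))
    have h2 : A ∪ closedNF G v = A ∪ {v} := by
      apply Finset.Subset.antisymm
      · intro x hx
        rcases Finset.mem_union.mp hx with hx | hx
        · exact Finset.mem_union_left _ hx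
        · rcases mem_closedNF'.mp hx with e | e
          · exact Finset.mem_union_right _ (Finset.mem_singleton.mpr e)
          · exact Finset.mem_union_left _ (hz (mem_openNF'.mpr e))
      · intro x hx
        rcases Finset.mem_union.mp hx with hx | hx
        · exact Finset.mem_union_left _ hx
        · rw [Finset.mem_singleton] at hx
          exact Finset.mem_union_right _ (mem_closedNF'.mpr (Or.inl hx))
    rw [h1, h2]

lemma main_induction [Fintype V] (G : SimpleGraph V) (h : WeaklyClawFree G) :
    ∀ n : ℕ, ∀ D : Finset V, ∀ t : Bool,
      (Finset.univ \ D.biUnion (closedNF G)).card ≤ n →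
      zVal G t (D.biUnion (closedNF G)) = dVal G t (D.biUnion (closedNF G)) := by
  intro n
  induction n with
  | zero =>
    intro D t hc
    have hA : D.biUnion (closedNF G) = Finset.univ := by
      have h0 : Finset.univ \ D.biUnion (closedNF G) = ∅ :=
        Finset.card_eq_zero.mp (Nat.le_zero.mp hc)
      exact Finset.univ_subset_iff.mp (Finset.sdiff_eq_empty_iff_subset.mp h0)
    have hdE : ¬ (dLegal G (D.biUnion (closedNF G))).Nonempty := by
      rw [hA]
      simp [dLegal, Finset.subset_univ]
    have hzE : ¬ (zLegal G (D.biUnion (closedNF G))).Nonempty :=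
      fun ⟨u, hu⟩ => hdE ⟨u, zLegal_subset_dLegal G _ hu⟩
    rw [zVal, dVal, dif_neg hzE, dif_neg hdE]
  | succ n ih =>
    intro D t hc
    set A := D.biUnion (closedNF G) with hAdef
    have IH : ∀ u : V, u ∈ dLegal G A → ∀ t' : Bool,
        zVal G t' (A ∪ closedNF G u) = dVal G t' (A ∪ closedNF G u) := by
      intro u hu t'
      have he : A ∪ closedNF G u = (insert u D).biUnion (closedNF G) := by
        rw [Finset.biUnion_insert, Finset.union_comm]
      have hcard : (Finset.univ \ (A ∪ closedNF G u)).card ≤ n := by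
        have := dLegal_dec G A hu
        omega
      rw [he]
      exact ih (insert u D) t' (by rw [← he]; exact hcard)
    by_cases hd : (dLegal G A).Nonempty
    · obtain ⟨v0, hv0⟩ := hd
      obtain ⟨u0, hu0, _⟩ := replace_move h D hv0
      have hz : (zLegal G A).Nonempty := ⟨u0, hu0⟩
      have hd' : (dLegal G A).Nonempty := ⟨v0, hv0⟩
      rw [zVal, dVal, dif_pos hz, dif_pos hd']
      cases t
      · simp only [Bool.false_eq_true, if_false]
        congr 1
        apply le_antisymm
        · apply Finset.sup'_le
          rintro ⟨u, hu⟩ -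
          have hud : u ∈ dLegal G A := zLegal_subset_dLegal G A hu
          calc zVal G true (A ∪ closedNF G u)
              = dVal G true (A ∪ closedNF G u) := IH u hud true
            _ ≤ _ := Finset.le_sup' (fun v : {x // x ∈ dLegal G A} =>
                dVal G true (A ∪ closedNF G v.1)) (Finset.mem_attach _ ⟨u, hud⟩)
        · apply Finset.sup'_le
          rintro ⟨v, hv⟩ -
          obtain ⟨u, hu, heq⟩ := replace_move h D hv
          calc dVal G true (A ∪ closedNF G v)
              = dVal G true (A ∪ closedNF G u) := by rw [heq]
            _ = zVal G true (A ∪ closedNF G u) :=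
                (IH u (zLegal_subset_dLegal G A hu) true).symm
            _ ≤ _ := Finset.le_sup' (fun w : {x // x ∈ zLegal G A} =>
                zVal G true (A ∪ closedNF G w.1)) (Finset.mem_attach _ ⟨u, hu⟩)
      · simp only [if_true]
        congr 1
        apply le_antisymm
        · apply Finset.le_inf'
          rintro ⟨v, hv⟩ -
          obtain ⟨u, hu, heq⟩ := replace_move h D hv
          calc ((zLegal G A).attach.inf' (Finset.Nonempty.attach hz) fun w =>
                zVal G false (A ∪ closedNF G w.1))
              ≤ zVal G false (A ∪ closedNF G u) :=
                Finset.inf'_le _ (Finset.mem_attach _ ⟨u, hu⟩)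
            _ = dVal G false (A ∪ closedNF G u) :=
                IH u (zLegal_subset_dLegal G A hu) false
            _ = dVal G false (A ∪ closedNF G v) := by rw [heq]
        · apply Finset.le_inf'
          rintro ⟨u, hu⟩ -
          calc ((dLegal G A).attach.inf' (Finset.Nonempty.attach hd') fun w =>
                dVal G false (A ∪ closedNF G w.1))
              ≤ dVal G false (A ∪ closedNF G u) :=
                Finset.inf'_le _ (Finset.mem_attach _ ⟨u, zLegal_subset_dLegal G A hu⟩)
            _ = zVal G false (A ∪ closedNF G u) :=
                (IH u (zLegal_subset_dLegal G A hu) false).symm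
    · have hz : ¬ (zLegal G A).Nonempty :=
        fun ⟨u, hu⟩ => hd ⟨u, zLegal_subset_dLegal G A hu⟩
      rw [zVal, dVal, dif_neg hz, dif_neg hd]

/-- If `G` is a finite weakly claw-free graph, then
`γ_Zg(G) = γ_g(G)` and `γ'_Zg(G) = γ'_g(G)`. -/
theorem weaklyClawFree_gammaZg_eq_gammaGg {V : Type*} [Fintype V] (G : SimpleGraph V)
    (h : WeaklyClawFree G) :
    gammaZg G = gammaGg G ∧ gammaZg' G = gammaGg' G := by
  have h0 : (∅ : Finset V) = (∅ : Finset V).biUnion (closedNF G) := by simp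
  constructor
  · show zVal G true ∅ = dVal G true ∅
    rw [h0]
    exact main_induction G h _ _ true le_rfl
  · show zVal G false ∅ = dVal G false ∅
    rw [h0]
    exact main_induction G h _ _ false le_rfl

end ZGamePaper
end
end

section
/- If G is a finite graph without isolated vertices and n ≥ 2, then the game domination number of G equals the game Z-domination number of the lexicographic product of G with the complete graph on n vertices: γ_g(G) = γ_Zg(G ∘ K_n). -/
open Finset

open scoped Classical

noncomputable section

namespace ZGamePaper

variable {V : Type*} {W : Type*}

lemma lexProd_adj (G : SimpleGraph V) (H : SimpleGraph W) (p q : V × W) :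
    (lexProd G H).Adj p q ↔ G.Adj p.1 q.1 ∨ (p.1 = q.1 ∧ H.Adj p.2 q.2) := Iff.rfl

lemma closedNF_lex [Fintype V] (G : SimpleGraph V) (n : ℕ) (p : V × Fin n) :
    closedNF (lexProd G (⊤ : SimpleGraph (Fin n))) p = closedNF G p.1 ×ˢ Finset.univ := by
  obtain ⟨g, h⟩ := p
  ext ⟨x, y⟩
  simp only [closedNF, mem_filter, mem_univ, true_and, mem_product, and_true,
    Prod.mk.injEq, lexProd_adj, SimpleGraph.top_adj]
  constructor
  · rintro (⟨rfl, rfl⟩ | hadj | ⟨rfl, _⟩)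
    · exact Or.inl rfl
    · exact Or.inr hadj
    · exact Or.inl rfl
  · rintro (rfl | hadj)
    · by_cases hy : y = h
      · exact Or.inl ⟨rfl, hy⟩
      · exact Or.inr (Or.inr ⟨rfl, fun hc => hy hc.symm⟩)
    · exact Or.inr (Or.inl hadj)

lemma zLegal_lex [Fintype V] (G : SimpleGraph V) {n : ℕ} (hn : 2 ≤ n) (B : Finset V) :
    zLegal (lexProd G (⊤ : SimpleGraph (Fin n))) (B ×ˢ Finset.univ)
      = dLegal G B ×ˢ Finset.univ := by
  haveI : Nontrivial (Fin n) := Fin.nontrivial_iff_two_le.mpr hn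
  ext ⟨g, h⟩
  simp only [zLegal, dLegal, mem_filter, mem_univ, true_and, mem_product, and_true]
  rw [Finset.not_subset, Finset.not_subset]
  constructor
  · rintro ⟨⟨x, y⟩, hxy, hxB⟩
    simp only [openNF, mem_filter, mem_univ, true_and, lexProd_adj,
      SimpleGraph.top_adj] at hxy
    have hxB' : x ∉ B := fun hx => hxB (mem_product.mpr ⟨hx, mem_univ _⟩)
    refine ⟨x, ?_, hxB'⟩
    simp only [closedNF, mem_filter, mem_univ, true_and]
    rcases hxy with hadj | ⟨rfl, _⟩
    · exact Or.inr hadj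
    · exact Or.inl rfl
  · rintro ⟨x, hx, hxB⟩
    simp only [closedNF, mem_filter, mem_univ, true_and] at hx
    rcases hx with rfl | hadj
    · obtain ⟨y, hy⟩ := exists_ne h
      refine ⟨(x, y), ?_, ?_⟩
      · simp only [openNF, mem_filter, mem_univ, true_and, lexProd_adj, SimpleGraph.top_adj]
        exact Or.inr (fun hc => hy hc.symm)
      · exact fun hc => hxB (mem_product.mp hc).1
    · refine ⟨(x, h), ?_, ?_⟩
      · simp only [openNF, mem_filter, mem_univ, true_and, lexProd_adj]
        exact Or.inl hadj
      · exact fun hc => hxB (mem_product.mp hc).1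

lemma zVal_lex_eq_dVal [Fintype V] (G : SimpleGraph V) {n : ℕ} (hn : 2 ≤ n) :
    ∀ (N : ℕ) (turn : Bool) (B : Finset V), (Finset.univ \ B).card < N →
      zVal (lexProd G (⊤ : SimpleGraph (Fin n))) turn (B ×ˢ Finset.univ) = dVal G turn B := by
  intro N
  induction N with
  | zero => intro _ _ h; omega
  | succ N ih =>
    intro turn B hB
    have h0 : (0 : ℕ) < n := by omega
    have hleg : zLegal (lexProd G (⊤ : SimpleGraph (Fin n))) (B ×ˢ Finset.univ)
        = dLegal G B ×ˢ Finset.univ := zLegal_lex G hn B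
    rw [zVal, dVal]
    by_cases hne : (dLegal G B).Nonempty
    · have hne' : (zLegal (lexProd G (⊤ : SimpleGraph (Fin n))) (B ×ˢ Finset.univ)).Nonempty := by
        rw [hleg]; exact hne.product ⟨⟨0, h0⟩, mem_univ _⟩
      rw [dif_pos hne', dif_pos hne]
      have hmove : ∀ (g : V) (h : Fin n) (t : Bool), g ∈ dLegal G B →
          zVal (lexProd G (⊤ : SimpleGraph (Fin n))) t
            ((B ×ˢ Finset.univ) ∪ closedNF (lexProd G (⊤ : SimpleGraph (Fin n))) (g, h))
            = dVal G t (B ∪ closedNF G g) := by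
        intro g h t hg
        have hd := dLegal_dec G B hg
        have hcard : (Finset.univ \ (B ∪ closedNF G g)).card < N := by omega
        rw [closedNF_lex, ← Finset.union_product]
        exact ih t _ hcard
      cases turn with
      | true =>
        simp only [if_true]
        congr 1
        apply le_antisymm
        · apply Finset.le_inf'
          rintro ⟨g, hg⟩ -
          have hp : ((g, (⟨0, h0⟩ : Fin n)) : V × Fin n)
              ∈ zLegal (lexProd G (⊤ : SimpleGraph (Fin n))) (B ×ˢ Finset.univ) := by
            rw [hleg]; exact mem_product.mpr ⟨hg, mem_univ _⟩
          refine le_trans (Finset.inf'_le _ (Finset.mem_attach _ ⟨_, hp⟩)) (le_of_eq ?_)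
          convert hmove g ⟨0, h0⟩ false hg using 3
          exact congrArg _ (Subsingleton.elim _ _)
        · apply Finset.le_inf'
          rintro ⟨⟨g, y⟩, hv⟩ -
          rw [hleg] at hv
          have hg : g ∈ dLegal G B := (mem_product.mp hv).1
          refine le_trans (Finset.inf'_le _ (Finset.mem_attach _ ⟨_, hg⟩)) (le_of_eq ?_)
          refine Eq.symm ?_
          convert hmove g y false hg using 3
          exact congrArg _ (Subsingleton.elim _ _)
      | false =>
        simp only [if_false, Bool.false_eq_true]
        congr 1
        apply le_antisymm
        · apply Finset.sup'_le
          rintro ⟨⟨g, y⟩, hv⟩ -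
          rw [hleg] at hv
          have hg : g ∈ dLegal G B := (mem_product.mp hv).1
          refine le_trans (le_of_eq ?_) (Finset.le_sup' _ (Finset.mem_attach _ ⟨_, hg⟩))
          convert hmove g y true hg using 3
          exact congrArg _ (Subsingleton.elim _ _)
        · apply Finset.sup'_le
          rintro ⟨g, hg⟩ -
          have hp : ((g, (⟨0, h0⟩ : Fin n)) : V × Fin n)
              ∈ zLegal (lexProd G (⊤ : SimpleGraph (Fin n))) (B ×ˢ Finset.univ) := by
            rw [hleg]; exact mem_product.mpr ⟨hg, mem_univ _⟩
          refine le_trans (le_of_eq ?_) (Finset.le_sup' _ (Finset.mem_attach _ ⟨_, hp⟩))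
          refine Eq.symm ?_
          convert hmove g ⟨0, h0⟩ true hg using 3
          exact congrArg _ (Subsingleton.elim _ _)
    · have hne' : ¬ (zLegal (lexProd G (⊤ : SimpleGraph (Fin n)))
          (B ×ˢ Finset.univ)).Nonempty := by
        rw [hleg, Finset.nonempty_product]
        exact fun hc => hne hc.1
      rw [dif_neg hne', dif_neg hne]

/-- If `G` has no isolated vertices and `n ≥ 2`, then
`γ_g(G) = γ_Zg(G ∘ K_n)`. -/
theorem gammaGg_eq_gammaZg_lexProd_top {V : Type*} [Fintype V] (G : SimpleGraph V)
    (hiso : ∀ v : V, ∃ u : V, G.Adj v u) (n : ℕ) (hn : 2 ≤ n) :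
    gammaGg G = gammaZg (lexProd G (⊤ : SimpleGraph (Fin n))) := by
  have h := zVal_lex_eq_dVal G hn ((Finset.univ \ (∅ : Finset V)).card + 1) true ∅
    (Nat.lt_succ_self _)
  rw [Finset.empty_product] at h
  exact h.symm

end ZGamePaper
end
end

section
/- If G is a finite graph and n ≥ 2, then every vertex of the lexicographic product G ∘ K_n has a true twin distinct from itself, and consequently G ∘ K_n is Z-insensitive. -/
open Finset

open scoped Classical

noncomputable section

namespace ZGamePaper

variable {V : Type*} {W : Type*}

lemma mem_closedNF_lexProd_top {V : Type*} [Fintype V] (G : SimpleGraph V)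
    {n : ℕ} (v : V) (i : Fin n) (x : V × Fin n) :
    x ∈ closedNF (lexProd G (⊤ : SimpleGraph (Fin n))) (v, i) ↔
      x.1 = v ∨ G.Adj v x.1 := by
  simp only [closedNF, lexProd, mem_filter, mem_univ, true_and, Prod.ext_iff,
    SimpleGraph.top_adj]
  constructor
  · rintro (⟨h1, _⟩ | h | ⟨h1, _⟩)
    · exact Or.inl h1
    · exact Or.inr h
    · exact Or.inl h1.symm
  · rintro (h1 | h)
    · by_cases h2 : x.2 = i
      · exact Or.inl ⟨h1, h2⟩
      · exact Or.inr (Or.inr ⟨h1.symm, fun hh => h2 hh.symm⟩)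
    · exact Or.inr (Or.inl h)

/-- If every vertex has a true twin distinct from itself, and every vertex has a
neighbor, then the graph is Z-insensitive. -/
lemma zInsensitive_of_twins {V : Type*} [Fintype V] (G : SimpleGraph V)
    (htwin : ∀ p : V, ∃ q : V, q ≠ p ∧ closedNF G q = closedNF G p) :
    ZInsensitive G := by
  constructor
  · intro v
    obtain ⟨q, hq, hcl⟩ := htwin v
    refine ⟨q, ?_⟩
    have : q ∈ closedNF G v := by
      rw [← hcl]; simp [closedNF]
    simp only [closedNF, mem_filter] at this
    rcases this.2 with h | h
    · exact absurd h hq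
    · exact h
  · rintro D ⟨v, hvA, hNv, -⟩
    obtain ⟨q, hq, hcl⟩ := htwin v
    have hqv : G.Adj v q := by
      have : q ∈ closedNF G v := by
        rw [← hcl]; simp [closedNF]
      simp only [closedNF, mem_filter] at this
      rcases this.2 with h | h
      · exact absurd h hq
      · exact h
    have hqA : q ∈ D.biUnion (closedNF G) := hNv (by simp [openNF, hqv])
    obtain ⟨d, hdD, hqd⟩ := Finset.mem_biUnion.mp hqA
    have hdA : ∀ y, (y = d ∨ G.Adj d y) → y ∈ D.biUnion (closedNF G) := by
      intro y hy
      exact Finset.mem_biUnion.mpr ⟨d, hdD, by simp [closedNF, hy]⟩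
    simp only [closedNF, mem_filter] at hqd
    rcases hqd.2 with rfl | h
    · exact hvA (hdA v (Or.inr hqv.symm))
    · have : d ∈ closedNF G v := by
        rw [← hcl]; simp [closedNF, h.symm]
      simp only [closedNF, mem_filter] at this
      rcases this.2 with rfl | h2
      · exact hvA (hdA d (Or.inl rfl))
      · exact hvA (hdA v (Or.inr h2.symm))

/-- If `n ≥ 2`, then every vertex of `G ∘ K_n` has a true twin
distinct from itself, and consequently `G ∘ K_n` is Z-insensitive. -/
theorem lexProd_top_twins_and_zInsensitive {V : Type*} [Fintype V] (G : SimpleGraph V)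
    (n : ℕ) (hn : 2 ≤ n) :
    (∀ p : V × Fin n, ∃ q : V × Fin n, q ≠ p ∧
      closedNF (lexProd G (⊤ : SimpleGraph (Fin n))) q =
        closedNF (lexProd G (⊤ : SimpleGraph (Fin n))) p) ∧
    ZInsensitive (lexProd G (⊤ : SimpleGraph (Fin n))) := by
  have htwin : ∀ p : V × Fin n, ∃ q : V × Fin n, q ≠ p ∧
      closedNF (lexProd G (⊤ : SimpleGraph (Fin n))) q =
        closedNF (lexProd G (⊤ : SimpleGraph (Fin n))) p := by
    intro p
    obtain ⟨j, hj⟩ : ∃ j : Fin n, j ≠ p.2 :=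
      Fintype.exists_ne_of_one_lt_card (by simp only [Fintype.card_fin]; omega) p.2
    refine ⟨(p.1, j), ?_, ?_⟩
    · intro h
      exact hj (congrArg Prod.snd h)
    · ext x
      rw [mem_closedNF_lexProd_top, show p = (p.1, p.2) from rfl,
        mem_closedNF_lexProd_top]
  exact ⟨htwin, zInsensitive_of_twins _ htwin⟩

end ZGamePaper
end
end

section
/- If G is a finite graph without isolated vertices and u, v are distinct false twins of G (i.e., N(u) = N(v) and u ≠ v), then γ_tg(G) = γ_tg(G − v), where G − v denotes the subgraph of G induced on V(G) \ {v}. -/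
open Finset

open scoped Classical

noncomputable section

namespace ZGamePaper

variable {V : Type*} {W : Type*}

lemma mem_openNF_iff [Fintype V] {G : SimpleGraph V} {w x : V} :
    x ∈ openNF G w ↔ G.Adj w x := by simp [openNF]

lemma tVal_twin {V : Type*} [Fintype V] (G : SimpleGraph V) (u v : V) (huv : u ≠ v)
    (htwin : openNF G u = openNF G v) (t : Bool) (B : Finset V)
    (hInv : v ∈ B ↔ u ∈ B) :
    tVal G t B
      = tVal (G.induce {x : V | x ≠ v}) t (B.subtype (· ∈ {x : V | x ≠ v})) := by
  set G' := G.induce {x : V | x ≠ v} with hG'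
  letI : DecidableEq ({x : V | x ≠ v} : Set V) := fun a b => Classical.propDecidable (a = b)
  set φ : Finset V → Finset ({x : V | x ≠ v} : Set V) :=
    fun A => A.subtype (· ∈ {x : V | x ≠ v}) with hφ
  have hadj : ∀ w : V, G.Adj w v ↔ G.Adj w u := by
    intro w
    constructor
    · intro h
      have hw : w ∈ openNF G v := mem_openNF_iff.mpr h.symm
      rw [← htwin] at hw
      exact (mem_openNF_iff.mp hw).symm
    · intro h
      have hw : w ∈ openNF G u := mem_openNF_iff.mpr h.symm
      rw [htwin] at hw
      exact (mem_openNF_iff.mp hw).symm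
  have hmemφ : ∀ (A : Finset V) (a : ({x : V | x ≠ v} : Set V)),
      a ∈ φ A ↔ (a : V) ∈ A := by
    intro A a; simp [hφ, Finset.mem_subtype]
  have hopen : ∀ w : ({x : V | x ≠ v} : Set V),
      openNF G' w = φ (openNF G (w : V)) := by
    intro w
    ext a
    rw [hmemφ, mem_openNF_iff, mem_openNF_iff]
    rfl
  have hφun : ∀ A C : Finset V, φ (A ∪ C) = φ A ∪ φ C := by
    intro A C; ext a; simp [hmemφ, Finset.mem_union]
  -- legality correspondence for vertices ≠ v
  have hleg : ∀ (A : Finset V), (v ∈ A ↔ u ∈ A) → ∀ (w : V) (hw : w ≠ v),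
      (w ∈ tLegal G A ↔ (⟨w, hw⟩ : ({x : V | x ≠ v} : Set V)) ∈ tLegal G' (φ A)) := by
    intro A hA w hw
    simp only [tLegal, Finset.mem_filter, Finset.mem_univ, true_and]
    rw [hopen]
    constructor
    · intro h hc
      apply h
      intro x hx
      by_cases hxv : x = v
      · subst hxv
        have hu : u ∈ openNF G w := mem_openNF_iff.mpr ((hadj w).mp (mem_openNF_iff.mp hx))
        have : u ∈ A := (hmemφ A ⟨u, huv⟩).mp (hc ((hmemφ _ ⟨u, huv⟩).mpr hu))
        exact hA.mpr this
      · exact (hmemφ A ⟨x, hxv⟩).mp (hc ((hmemφ _ ⟨x, hxv⟩).mpr hx))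
    · intro h hc
      apply h
      intro a ha
      exact (hmemφ A a).mpr (hc ((hmemφ _ a).mp ha))
  have hlegv : ∀ A : Finset V, (v ∈ tLegal G A ↔ u ∈ tLegal G A) := by
    intro A
    simp only [tLegal, Finset.mem_filter, Finset.mem_univ, true_and, htwin]
  -- main strong induction
  suffices H : ∀ n (t : Bool) (B : Finset V), (Finset.univ \ B).card = n →
      (v ∈ B ↔ u ∈ B) → tVal G t B = tVal G' t (φ B) by
    exact H _ t B rfl hInv
  clear hInv t B
  intro n
  induction n using Nat.strong_induction_on with
  | _ n ih =>
    intro t B hn hInv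
    have hInvN : ∀ w : V, (v ∈ B ∪ openNF G w ↔ u ∈ B ∪ openNF G w) := by
      intro w
      simp only [Finset.mem_union, mem_openNF_iff, hadj w, hInv]
    -- value correspondence for legal moves w ≠ v
    have hval : ∀ (w : V) (hw : w ≠ v), w ∈ tLegal G B → ∀ b : Bool,
        tVal G b (B ∪ openNF G w)
          = tVal G' b (φ B ∪ openNF G' (⟨w, hw⟩ : ({x : V | x ≠ v} : Set V))) := by
      intro w hw hwl b
      rw [hopen, ← hφun]
      exact ih _ (hn ▸ tLegal_dec G B hwl) b (B ∪ openNF G w) rfl (hInvN w)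
    have hvalv : ∀ b : Bool, v ∈ tLegal G B →
        tVal G b (B ∪ openNF G v)
          = tVal G' b (φ B ∪ openNF G' (⟨u, huv⟩ : ({x : V | x ≠ v} : Set V))) := by
      intro b hvB
      have hu : u ∈ tLegal G B := (hlegv B).mp hvB
      rw [← htwin]
      exact hval u huv hu b
    have hne : (tLegal G B).Nonempty ↔ (tLegal G' (φ B)).Nonempty := by
      constructor
      · rintro ⟨w, hwl⟩
        by_cases hw : w = v
        · subst hw
          exact ⟨⟨u, huv⟩, (hleg B hInv u huv).mp ((hlegv B).mp hwl)⟩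
        · exact ⟨⟨w, hw⟩, (hleg B hInv w hw).mp hwl⟩
      · rintro ⟨w', hw'⟩
        exact ⟨(w' : V), (hleg B hInv (w' : V) w'.2).mpr hw'⟩
    rw [tVal, tVal]
    by_cases h : (tLegal G B).Nonempty
    · have h' : (tLegal G' (φ B)).Nonempty := hne.mp h
      have hle1 : ∀ b : Bool, ∀ w : {x // x ∈ tLegal G B},
          ∃ w' : {x // x ∈ tLegal G' (φ B)},
            tVal G b (B ∪ openNF G w.1) = tVal G' b (φ B ∪ openNF G' w'.1) := by
        intro b w
        by_cases hw : w.1 = v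
        · have hv : v ∈ tLegal G B := hw ▸ w.2
          refine ⟨⟨⟨u, huv⟩, (hleg B hInv u huv).mp ((hlegv B).mp hv)⟩, ?_⟩
          rw [hw]
          exact hvalv b hv
        · exact ⟨⟨⟨w.1, hw⟩, (hleg B hInv w.1 hw).mp w.2⟩, hval w.1 hw w.2 b⟩
      have hle2 : ∀ b : Bool, ∀ w' : {x // x ∈ tLegal G' (φ B)},
          ∃ w : {x // x ∈ tLegal G B},
            tVal G' b (φ B ∪ openNF G' w'.1) = tVal G b (B ∪ openNF G w.1) := by
        intro b w'
        have hmem : (w'.1 : V) ∈ tLegal G B :=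
          (hleg B hInv (w'.1 : V) w'.1.2).mpr w'.2
        exact ⟨⟨(w'.1 : V), hmem⟩, (hval (w'.1 : V) w'.1.2 hmem b).symm⟩
      rw [dif_pos h, dif_pos h']
      cases t
      · simp only [Bool.false_eq_true, if_false]
        congr 1
        apply le_antisymm
        · apply Finset.sup'_le
          intro w _
          obtain ⟨w', he⟩ := hle1 true w
          exact he.trans_le (Finset.le_sup'
            (fun x => tVal G' true (φ B ∪ openNF G' x.1)) (Finset.mem_attach _ w'))
        · apply Finset.sup'_le
          intro w' _
          obtain ⟨w, he⟩ := hle2 true w'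
          exact he.trans_le (Finset.le_sup'
            (fun x => tVal G true (B ∪ openNF G x.1)) (Finset.mem_attach _ w))
      · rw [if_pos rfl]
        congr 1
        apply le_antisymm
        · apply Finset.le_inf'
          intro w' _
          obtain ⟨w, he⟩ := hle2 false w'
          rw [Finset.inf'_le_iff]
          exact ⟨w, Finset.mem_attach _ w, le_of_eq he.symm⟩
        · apply Finset.le_inf'
          intro w _
          obtain ⟨w', he⟩ := hle1 false w
          rw [Finset.inf'_le_iff]
          exact ⟨w', Finset.mem_attach _ w', le_of_eq he.symm⟩
    · rw [dif_neg h, dif_neg (fun hc => h (hne.mpr hc))]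

/-- If `G` has no isolated vertices and `u ≠ v` are false twins of
`G`, then `γ_tg(G) = γ_tg(G - v)`. -/
theorem gammaTg_deleteFalseTwin {V : Type*} [Fintype V] (G : SimpleGraph V)
    (hiso : ∀ x : V, ∃ y : V, G.Adj x y) (u v : V) (huv : u ≠ v)
    (htwin : openNF G u = openNF G v) :
    gammaTg G = gammaTg (G.induce {x : V | x ≠ v}) := by
  have := tVal_twin G u v huv htwin true ∅ (by simp)
  have hempty : (∅ : Finset V).subtype (· ∈ {x : V | x ≠ v}) = ∅ := by
    ext a; simp [Finset.mem_subtype]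
  rw [hempty] at this
  exact this

end ZGamePaper
end
end
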